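/- Let Y be a closed subspace of a real Banach space X. If for every x* ∈ X* that attains its norm at some point of the unit sphere of Y, the only best approximation to x* from Y⊥ is 0 (i.e., P_{Y⊥}(x*) = {0}), then every y* ∈ Y* attaining its norm on the unit sphere of Y has a unique norm-preserving extension to X. -/

import Mathlib

open NormedSpace Metric Set

namespace Paper

variable {X : Type*} [NormedAddCommGroup X] [NormedSpace ℝ X]

/-- The restriction of a continuous linear functional to a subspace. -/
noncomputable def restr (Y : Submodule ℝ X) (f : StrongDual ℝ X) : StrongDual ℝ ↥Y :=
  f.comp Y.subtypeL

/-- The annihilator `Y⊥` of a subspace `Y` in the dual. -/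
def ann (Y : Submodule ℝ X) : Set (StrongDual ℝ X) := {f | ∀ y ∈ Y, f y = 0}

/-- The set of norm-preserving (Hahn–Banach) extensions of `g : Y* ` to `X`. -/
def HB (Y : Submodule ℝ X) (g : StrongDual ℝ ↥Y) : Set (StrongDual ℝ X) :=
  {f | (∀ y : Y, f (y : X) = g y) ∧ ‖f‖ = ‖g‖}

/-- Best approximations to `x` from a set `A`. -/
def bestApprox {E : Type*} [NormedAddCommGroup E] (A : Set E) (x : E) : Set E :=
  {z ∈ A | ‖x - z‖ = infDist x A}

/-- Property-(U): every functional on `Y` has a unique norm-preserving extension to `X`. -/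
def propU (Y : Submodule ℝ X) : Prop :=
  ∀ g : StrongDual ℝ ↥Y, ∃! f : StrongDual ℝ X, f ∈ HB Y g

/-- `Y# `: the set of functionals whose norm equals the norm of their restriction to `Y`. -/
def sharp (Y : Submodule ℝ X) : Set (StrongDual ℝ X) := {f | ‖f‖ = ‖restr Y f‖}

/-- Property-(HB), stated via the decomposition `X* = Y# ⊕ Y⊥`. -/
def propHB (Y : Submodule ℝ X) : Prop :=
  (∀ f ∈ sharp Y, ∀ g ∈ sharp Y, f + g ∈ sharp Y) ∧
  (∀ (c : ℝ), ∀ f ∈ sharp Y, c • f ∈ sharp Y) ∧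
  (∀ f : StrongDual ℝ X, ∃ g ∈ sharp Y, ∃ h ∈ ann Y, f = g + h) ∧
  (∀ g ∈ sharp Y, ∀ h ∈ ann Y, h ≠ 0 → ‖g‖ < ‖g + h‖ ∧ ‖h‖ ≤ ‖g + h‖)

end Paper

open Paper

/-- if every `x* ∈ X*` attaining its norm on the unit sphere of `Y` has `0` as
its unique best approximation from `Y⊥`, then every norm-attaining `y* ∈ Y*` has a unique
norm-preserving extension to `X`. -/
theorem stmt0 {X : Type*} [NormedAddCommGroup X] [NormedSpace ℝ X] [CompleteSpace X]
    (Y : Submodule ℝ X) (hYc : IsClosed (Y : Set X))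
    (h : ∀ f : StrongDual ℝ X, (∃ y : Y, ‖(y : X)‖ = 1 ∧ f (y : X) = ‖f‖) →
      bestApprox (ann Y) f = {0}) :
    ∀ g : StrongDual ℝ ↥Y, (∃ y : Y, ‖(y : X)‖ = 1 ∧ g y = ‖g‖) →
      ∃! f : StrongDual ℝ X, f ∈ HB Y g := by
  rintro g ⟨y, hy1, hgy⟩
  obtain ⟨F, hF, hFnorm⟩ := exists_extension_norm_eq Y g
  refine ⟨F, ⟨fun z => (hF z).symm ▸ rfl, hFnorm⟩, ?_⟩
  -- uniqueness
  intro f₂ hf₂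
  -- general fact: any f ∈ HB attains norm at y and infDist f (ann Y) = ‖g‖
  have key : ∀ f : StrongDual ℝ X, f ∈ HB Y g → infDist f (ann Y) = ‖g‖ := by
    rintro f ⟨hfe, hfn⟩
    have h0 : (0 : StrongDual ℝ X) ∈ ann Y := fun z _ => rfl
    apply le_antisymm
    · have := infDist_le_dist_of_mem (x := f) h0
      simpa [dist_eq_norm, hfn] using this
    · by_contra hlt
      push_neg at hlt
      obtain ⟨z, hz, hdz⟩ := (infDist_lt_iff ⟨0, h0⟩).mp hlt
      refine absurd hdz (not_lt.mpr ?_)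
      have hzy : z (y : X) = 0 := hz y y.2
      have : ‖g‖ = (f - z) (y : X) := by
        simp [hfe y, hzy, hgy]
      calc ‖g‖ = (f - z) (y : X) := this
        _ ≤ |(f - z) (y : X)| := le_abs_self _
        _ ≤ ‖f - z‖ * ‖(y : X)‖ := (f - z).le_opNorm _
        _ = dist f z := by rw [hy1, dist_eq_norm]; ring
  have hFHB : F ∈ HB Y g := ⟨fun z => hF z, hFnorm⟩
  have hf₂att : f₂ (y : X) = ‖f₂‖ := by
    rw [hf₂.1 y, hgy, hf₂.2]
  have hbest := h f₂ ⟨y, hy1, hf₂att⟩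
  have hmem : f₂ - F ∈ bestApprox (ann Y) f₂ := by
    constructor
    · intro z hz
      simp [hf₂.1 ⟨z, hz⟩, hF ⟨z, hz⟩]
    · rw [key f₂ hf₂]
      have heq : f₂ - (f₂ - F) = F := by abel
      rw [heq, hFnorm]
  rw [hbest] at hmem
  have : f₂ - F = 0 := hmem
  linear_combination (norm := module) this
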